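/- Under the assumptions that X1, X2, Y are pairwise conditionally independent given h ∈ ℋ (ℋ finite) and that the matrix [P(X1, X2)] has rank |ℋ|, if f1 is a tv-embedding of 𝒳1 w.r.t. 𝒳2, then there exists a function q1 such that P(Y=y | X1=x1) = q1(f1(x1), y) for all x1, y. -/

import Mathlib

open Finset

section Aux
variable {X1 X2 Y H : Type*} [Fintype X1] [Fintype X2] [Fintype Y] [Fintype H]

noncomputable def auxPP (p : X1 → X2 → Y → H → ℝ) (h : H) : ℝ := ∑ x1, ∑ x2, ∑ y, p x1 x2 y h
noncomputable def auxAl (p : X1 → X2 → Y → H → ℝ) (x1 : X1) (h : H) : ℝ := ∑ x2, ∑ y, p x1 x2 y h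
noncomputable def auxBe (p : X1 → X2 → Y → H → ℝ) (x2 : X2) (h : H) : ℝ := ∑ x1, ∑ y, p x1 x2 y h
noncomputable def auxGa (p : X1 → X2 → Y → H → ℝ) (y : Y) (h : H) : ℝ := ∑ x1, ∑ x2, p x1 x2 y h
noncomputable def auxS (p : X1 → X2 → Y → H → ℝ) (x1 : X1) : ℝ := ∑ x2, ∑ y, ∑ h, p x1 x2 y h

end Aux

/-- If X1, X2, Y are conditionally independent given h, the matrix
`[P(x1,x2)]` has rank `|ℋ|`, and `f1` is a tv-embedding of 𝒳1 w.r.t. 𝒳2, then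
there exists `q1` with `P(y|x1) = q1 (f1 x1) y`. -/
theorem stmt3 {X1 X2 Y H A : Type*} [Fintype X1] [Fintype X2] [Fintype Y] [Fintype H]
    (p : X1 → X2 → Y → H → ℝ)
    (hnn : ∀ x1 x2 y h, 0 ≤ p x1 x2 y h)
    (hsum : ∑ x1, ∑ x2, ∑ y, ∑ h, p x1 x2 y h = 1)
    (hpos_X1 : ∀ x1, 0 < ∑ x2, ∑ y, ∑ h, p x1 x2 y h)
    (hpos_H : ∀ h, 0 < ∑ x1, ∑ x2, ∑ y, p x1 x2 y h)
    (hci : ∀ x1 x2 y h,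
      p x1 x2 y h / (∑ x1', ∑ x2', ∑ y', p x1' x2' y' h)
        = ((∑ x2', ∑ y', p x1 x2' y' h) / (∑ x1', ∑ x2', ∑ y', p x1' x2' y' h))
          * ((∑ x1', ∑ y', p x1' x2 y' h) / (∑ x1', ∑ x2', ∑ y', p x1' x2' y' h))
          * ((∑ x1', ∑ x2', p x1' x2' y h) / (∑ x1', ∑ x2', ∑ y', p x1' x2' y' h)))
    (hrank : (Matrix.of fun (x1 : X1) (x2 : X2) =>
        ∑ y, ∑ h, p x1 x2 y h).rank = Fintype.card H)
    (f1 : X1 → A) (g1 : A → X2 → ℝ)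
    (hf1 : ∀ x1 x2,
      (∑ y, ∑ h, p x1 x2 y h) / (∑ x2', ∑ y, ∑ h, p x1 x2' y h)
        = g1 (f1 x1) x2) :
    ∃ q1 : A → Y → ℝ, ∀ x1 y,
      (∑ x2, ∑ h, p x1 x2 y h) / (∑ x2, ∑ y', ∑ h, p x1 x2 y' h)
        = q1 (f1 x1) y := by
  classical
  have hP : ∀ h, 0 < auxPP p h := hpos_H
  have hP0 : ∀ h, auxPP p h ≠ 0 := fun h => (hP h).ne'
  have hSpos : ∀ x1, 0 < auxS p x1 := hpos_X1
  have hS0 : ∀ x1, auxS p x1 ≠ 0 := fun x1 => (hSpos x1).ne'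
  -- key factorization
  have key : ∀ x1 x2 y h,
      p x1 x2 y h = auxAl p x1 h * auxBe p x2 h * auxGa p y h / (auxPP p h)^2 := by
    intro x1 x2 y h
    have hc : p x1 x2 y h / auxPP p h
        = (auxAl p x1 h / auxPP p h) * (auxBe p x2 h / auxPP p h)
          * (auxGa p y h / auxPP p h) := hci x1 x2 y h
    have h0 := hP0 h
    field_simp at hc
    rw [eq_div_iff (pow_ne_zero _ h0)]
    have hc' : p x1 x2 y h * (auxPP p h)^2 * auxPP p h
        = auxAl p x1 h * auxBe p x2 h * auxGa p y h * auxPP p h := by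
      linear_combination hc * auxPP p h
    exact mul_right_cancel₀ h0 hc'
  have sumbe : ∀ h, ∑ x2, auxBe p x2 h = auxPP p h := fun h => Finset.sum_comm
  have sumga : ∀ h, ∑ y, auxGa p y h = auxPP p h := by
    intro h
    rw [show (∑ y, auxGa p y h) = ∑ y : Y, ∑ x1, ∑ x2, p x1 x2 y h from rfl,
      Finset.sum_comm]
    exact Finset.sum_congr rfl fun x1 _ => Finset.sum_comm
  have hS : ∀ x1, auxS p x1 = ∑ h, auxAl p x1 h := by
    intro x1
    calc auxS p x1 = ∑ x2 : X2, ∑ h, ∑ y, p x1 x2 y h :=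
          Finset.sum_congr rfl fun _ _ => Finset.sum_comm
      _ = ∑ h, ∑ x2, ∑ y, p x1 x2 y h := Finset.sum_comm
  -- joint distributions
  have hM : ∀ x1 x2, (∑ y, ∑ h, p x1 x2 y h)
      = ∑ h, auxAl p x1 h * auxBe p x2 h / auxPP p h := by
    intro x1 x2
    rw [Finset.sum_comm]
    refine Finset.sum_congr rfl fun h _ => ?_
    calc ∑ y, p x1 x2 y h
        = ∑ y, auxAl p x1 h * auxBe p x2 h * auxGa p y h / (auxPP p h)^2 :=
          Finset.sum_congr rfl fun y _ => key x1 x2 y h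
      _ = auxAl p x1 h * auxBe p x2 h * (∑ y, auxGa p y h) / (auxPP p h)^2 := by
          rw [← Finset.sum_div, ← Finset.mul_sum]
      _ = auxAl p x1 h * auxBe p x2 h / auxPP p h := by
          rw [sumga h, pow_two, mul_div_mul_right _ _ (hP0 h)]
  have hN : ∀ x1 y, (∑ x2, ∑ h, p x1 x2 y h)
      = ∑ h, auxAl p x1 h * auxGa p y h / auxPP p h := by
    intro x1 y
    rw [Finset.sum_comm]
    refine Finset.sum_congr rfl fun h _ => ?_
    calc ∑ x2, p x1 x2 y h
        = ∑ x2, auxAl p x1 h * auxGa p y h * auxBe p x2 h / (auxPP p h)^2 := by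
          refine Finset.sum_congr rfl fun x2 _ => ?_
          rw [key x1 x2 y h]; ring
      _ = auxAl p x1 h * auxGa p y h * (∑ x2, auxBe p x2 h) / (auxPP p h)^2 := by
          rw [← Finset.sum_div, ← Finset.mul_sum]
      _ = auxAl p x1 h * auxGa p y h / auxPP p h := by
          rw [sumbe h, pow_two, mul_div_mul_right _ _ (hP0 h)]
  -- matrix factorization and rank
  have hMB : (Matrix.of fun (x1 : X1) (x2 : X2) => ∑ y, ∑ h, p x1 x2 y h)
      = (Matrix.of fun (x1 : X1) (h : H) => auxAl p x1 h / auxPP p h)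
        * (Matrix.of fun (h : H) (x2 : X2) => auxBe p x2 h) := by
    ext x1 x2
    rw [Matrix.mul_apply]
    simp only [Matrix.of_apply]
    rw [hM x1 x2]
    exact Finset.sum_congr rfl fun h _ => by rw [div_mul_eq_mul_div]
  set B : Matrix H X2 ℝ := Matrix.of fun (h : H) (x2 : X2) => auxBe p x2 h with hBdef
  have hrankB : B.rank = Fintype.card H := by
    refine le_antisymm (Matrix.rank_le_card_height B) ?_
    calc Fintype.card H
        = ((Matrix.of fun (x1 : X1) (h : H) => auxAl p x1 h / auxPP p h) * B).rank := by
          rw [← hMB, hrank]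
      _ ≤ B.rank := Matrix.rank_mul_le_right _ B
  have hrange : LinearMap.range B.mulVecLin = ⊤ := by
    apply Submodule.eq_top_of_finrank_eq
    rw [Module.finrank_fintype_fun_eq_card, ← hrankB]
    rfl
  have hsurj : Function.Surjective B.mulVecLin := LinearMap.range_eq_top.mp hrange
  choose Rv hRv using fun j => hsurj (Pi.single j 1)
  have hBR : ∀ h' h, (∑ x2, auxBe p x2 h' * Rv h x2) = if h' = h then 1 else 0 := by
    intro h' h
    have hthis := congrFun (hRv h) h'
    simp only [Matrix.mulVecLin_apply, Matrix.mulVec, dotProduct, hBdef,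
      Matrix.of_apply] at hthis
    rw [hthis]
    exact Pi.single_apply h 1 h'
  -- posterior weights
  have hwB : ∀ x1 x2,
      (∑ h, auxAl p x1 h / (auxS p x1 * auxPP p h) * auxBe p x2 h) = g1 (f1 x1) x2 := by
    intro x1 x2
    have : (∑ y, ∑ h, p x1 x2 y h) / (∑ x2', ∑ y, ∑ h, p x1 x2' y h)
        = g1 (f1 x1) x2 := hf1 x1 x2
    rw [hM x1 x2] at this
    rw [← this, show (∑ x2', ∑ y, ∑ h, p x1 x2' y h) = auxS p x1 from rfl,
      Finset.sum_div]
    refine Finset.sum_congr rfl fun h _ => ?_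
    field_simp
  have hwR : ∀ x1 h, auxAl p x1 h / (auxS p x1 * auxPP p h)
      = ∑ x2, g1 (f1 x1) x2 * Rv h x2 := by
    intro x1 h
    symm
    calc ∑ x2, g1 (f1 x1) x2 * Rv h x2
        = ∑ x2, (∑ h', auxAl p x1 h' / (auxS p x1 * auxPP p h') * auxBe p x2 h') * Rv h x2 :=
          Finset.sum_congr rfl fun x2 _ => by rw [hwB x1 x2]
      _ = ∑ x2, ∑ h', auxAl p x1 h' / (auxS p x1 * auxPP p h') * (auxBe p x2 h' * Rv h x2) := by
          refine Finset.sum_congr rfl fun x2 _ => ?_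
          rw [Finset.sum_mul]
          exact Finset.sum_congr rfl fun h' _ => by ring
      _ = ∑ h', auxAl p x1 h' / (auxS p x1 * auxPP p h') * ∑ x2, auxBe p x2 h' * Rv h x2 := by
          rw [Finset.sum_comm]
          exact Finset.sum_congr rfl fun h' _ => by rw [Finset.mul_sum]
      _ = ∑ h', auxAl p x1 h' / (auxS p x1 * auxPP p h') * (if h' = h then 1 else 0) :=
          Finset.sum_congr rfl fun h' _ => by rw [hBR h' h]
      _ = auxAl p x1 h / (auxS p x1 * auxPP p h) := by simp
  -- conclude
  refine ⟨fun a y => ∑ h, (∑ x2, g1 a x2 * Rv h x2) * auxGa p y h, fun x1 y => ?_⟩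
  rw [hN x1 y, show (∑ x2, ∑ y', ∑ h, p x1 x2 y' h) = auxS p x1 from rfl, Finset.sum_div]
  refine Finset.sum_congr rfl fun h _ => ?_
  rw [← hwR x1 h, div_mul_eq_mul_div, div_div, mul_comm (auxPP p h) (auxS p x1)]
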